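/- Let h₀₂, h₁₃, γ₁, γ₂, P₀ > 0 with (h₁₃√γ₁ + h₂₃√γ₂)² ≤ min(h₀₁², h₀₂²). Define C(x) = (1/2)log₂(1+x), C_up(P₀) = (h₁₃√γ₁ + h₂₃√γ₂)²·P₀/(2 ln 2), and C_DDF(P₀) = min((1/2)C(2h₀₂²P₀), (1/2)C(2(h₁₃√γ₁+h₂₃√γ₂)²P₀)). Then lim_{P₀→0⁺} C_DDF(P₀)/C_up(P₀) = 1. -/

import Mathlib

noncomputable def gaussC (x : ℝ) : ℝ := (1 / 2) * Real.logb 2 (1 + x)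

lemma log_one_add_div_self_tendsto :
    Filter.Tendsto (fun x : ℝ => Real.log (1 + x) / x) (nhdsWithin 0 (Set.Ioi 0)) (nhds 1) := by
  have hd : HasDerivAt (fun x : ℝ => Real.log (1 + x)) 1 0 := by
    have h1 : HasDerivAt (fun x : ℝ => 1 + x) 1 0 := by
      simpa using (hasDerivAt_id (0:ℝ)).const_add 1
    simpa using h1.log (by norm_num)
  have h := hasDerivAt_iff_tendsto_slope.mp hd
  have h2 : Filter.Tendsto (slope (fun x : ℝ => Real.log (1 + x)) 0)
      (nhdsWithin 0 (Set.Ioi 0)) (nhds 1) :=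
    h.mono_left (nhdsWithin_mono _ (fun x hx => ne_of_gt hx))
  refine h2.congr' ?_
  filter_upwards [self_mem_nhdsWithin] with x hx
  simp [slope_def_field]

/-- At low SNR, under the channel condition, the ratio of the DDF rate to the cut-set
upper bound tends to 1 as `P₀ → 0⁺`. -/
theorem ddf_low_snr_optimal (h01 h02 h13 h23 γ1 γ2 : ℝ)
    (hh01 : 0 < h01) (hh02 : 0 < h02) (hh13 : 0 < h13) (hh23 : 0 < h23)
    (hγ1 : 0 < γ1) (hγ2 : 0 < γ2)
    (hcond : (h13 * Real.sqrt γ1 + h23 * Real.sqrt γ2) ^ 2 ≤ min (h01 ^ 2) (h02 ^ 2)) :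
    Filter.Tendsto
      (fun P0 : ℝ =>
        (min ((1 / 2) * gaussC (2 * h02 ^ 2 * P0))
            ((1 / 2) * gaussC (2 * (h13 * Real.sqrt γ1 + h23 * Real.sqrt γ2) ^ 2 * P0))) /
          ((h13 * Real.sqrt γ1 + h23 * Real.sqrt γ2) ^ 2 * P0 / (2 * Real.log 2)))
      (nhdsWithin 0 (Set.Ioi 0)) (nhds 1) := by
  set s := (h13 * Real.sqrt γ1 + h23 * Real.sqrt γ2) ^ 2 with hs_def
  have hsum : 0 < h13 * Real.sqrt γ1 + h23 * Real.sqrt γ2 :=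
    add_pos (mul_pos hh13 (Real.sqrt_pos.mpr hγ1)) (mul_pos hh23 (Real.sqrt_pos.mpr hγ2))
  have hs : 0 < s := pow_pos hsum 2
  have hsle : s ≤ h02 ^ 2 := hcond.trans (min_le_right _ _)
  have hlog2 : Real.log 2 ≠ 0 := ne_of_gt (Real.log_pos one_lt_two)
  -- inner map
  have hmap : Filter.Tendsto (fun P0 : ℝ => 2 * s * P0)
      (nhdsWithin 0 (Set.Ioi 0)) (nhdsWithin 0 (Set.Ioi 0)) := by
    refine tendsto_nhdsWithin_iff.mpr ⟨?_, ?_⟩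
    · have : Filter.Tendsto (fun P0 : ℝ => 2 * s * P0) (nhds 0) (nhds (2 * s * 0)) :=
        (continuous_const.mul continuous_id).tendsto 0
      simpa using this.mono_left nhdsWithin_le_nhds
    · filter_upwards [self_mem_nhdsWithin] with x hx
      exact mul_pos (by positivity : (0:ℝ) < 2 * s) hx
  have hcomp := log_one_add_div_self_tendsto.comp hmap
  refine hcomp.congr' ?_
  filter_upwards [self_mem_nhdsWithin] with P0 hP0
  have hP0' : (0:ℝ) < P0 := hP0
  have hmin : min ((1 / 2) * gaussC (2 * h02 ^ 2 * P0)) ((1 / 2) * gaussC (2 * s * P0))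
      = (1 / 2) * gaussC (2 * s * P0) := by
    apply min_eq_right
    have hx : 2 * s * P0 ≤ 2 * h02 ^ 2 * P0 := by nlinarith
    unfold gaussC
    have h1 : (0:ℝ) < 1 + 2 * s * P0 := by positivity
    have : Real.log (1 + 2 * s * P0) ≤ Real.log (1 + 2 * h02 ^ 2 * P0) :=
      Real.log_le_log h1 (by linarith)
    have hl2 : (0:ℝ) < Real.log 2 := Real.log_pos one_lt_two
    simp only [Real.logb]
    have h2 := div_le_div_of_nonneg_right this hl2.le
    linarith
  simp only [Function.comp, hmin]
  unfold gaussC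
  rw [Real.logb]
  have hne : s * P0 ≠ 0 := by positivity
  field_simp
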